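/- arXiv:2506.10951 — 7 statements merged into one kernel-verified Lean document; each statement's English description precedes it below -/
import Mathlib

section
/- Let F be a filter of sets on X and φ : X → [0,1]. Then ⨆_{A ∈ F^#} ⨅_{x ∈ A} φ(x) = ⨅_{F ∈ F} ⨆_{x ∈ F} φ(x), where F^# = {B ⊆ X : B ∩ F ≠ ∅ for all F ∈ F} is the grill of F. -/
open Filter Set
open scoped ENNReal

noncomputable section
attribute [local instance] Classical.propDecidable

instance : Fact ((0:ℝ) ≤ 1) := ⟨zero_le_one⟩

/-- The value quantale `V = [0,1]` with multiplication. -/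
abbrev V := unitInterval

/-- Residuation `t ⊘ x` on `[0,1]`: `min (t/x) 1` if `x ≠ 0`, and `1` if `x = 0`. -/
def oslash (t x : V) : V :=
  if x = 0 then 1
  else ⟨min (t.1 / x.1) 1, ⟨le_min (div_nonneg t.2.1 x.2.1) zero_le_one, min_le_right _ _⟩⟩

/-- The grill of a filter: sets meeting every member of the filter. -/
def grill {X : Type*} (F : Filter X) : Set (Set X) := {B | ∀ S ∈ F, (B ∩ S).Nonempty}

/-- `limsup` of a `V`-valued function along a family of sets. -/
def limsupF {X : Type*} (F : Set (Set X)) (f : X → V) : V := ⨅ s ∈ F, ⨆ t ∈ s, f t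

/-- `liminf` of a `V`-valued function along a family of sets. -/
def liminfF {X : Type*} (F : Set (Set X)) (f : X → V) : V := ⨆ s ∈ F, ⨅ t ∈ s, f t

/-- A convergence approach space structure on `X`, valued in `V = [0,1]`:
`lam F x` measures how well `F` converges to `x` (1 = full convergence);
finer filters converge better, and principal ultrafilters fully converge. -/
structure CAS (X : Type*) where
  lam : Filter X → X → V
  mono : ∀ ⦃F G : Filter X⦄, F ≤ G → lam G ≤ lam F
  centered : ∀ x : X, lam (pure x) x = 1

/-- The standard approach structure on `V`. -/
def lamV (F : Filter V) (v : V) : V := oslash v (⨆ A ∈ grill F, sInf A)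

/-- `f : X → V` is a contraction into `(V, λ_V)` (characterized pointwise). -/
def Contr {X : Type*} (Λ : CAS X) (f : X → V) : Prop :=
  ∀ (F : Filter X) (x : X), Λ.lam F x ≤ oslash (f x) (limsupF F.sets f)

/-- Indicator function of a set, valued in `V`. -/
def theta {X : Type*} (A : Set X) : X → V := fun x => if x ∈ A then 1 else 0

/-- The lower-hull operator: the smallest contraction above `f`. -/
def Cop {X : Type*} (Λ : CAS X) (f : X → V) : X → V :=
  sInf {g : X → V | Contr Λ g ∧ f ≤ g}

/-- The adherence function of a set `A`. -/
def adhSet {X : Type*} (Λ : CAS X) (A : Set X) : X → V :=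
  fun x => ⨆ (U : Ultrafilter X) (_ : A ∈ U), Λ.lam U x

/-- The adherence function of a filter. -/
def adhFilter {X : Type*} (Λ : CAS X) (F : Filter X) : X → V :=
  fun x => ⨆ (U : Ultrafilter X) (_ : (U : Filter X) ≤ F), Λ.lam U x

/-- Adherence in `(V, λ_V)` of a subset of `V`. -/
def adhV (A : Set V) (v : V) : V := ⨆ (U : Ultrafilter V) (_ : A ∈ U), lamV U v

/-- for a proper filter `F` on `X` and `φ : X → [0,1]`,
`⨆_{A ∈ F^#} ⨅_{x ∈ A} φ x = ⨅_{F ∈ F} ⨆_{x ∈ F} φ x`. -/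
theorem stmt4 {X : Type*} (F : Filter X) [F.NeBot] (φ : X → V) :
    ⨆ A ∈ grill F, ⨅ x ∈ A, φ x = ⨅ s ∈ F, ⨆ x ∈ s, φ x := by
  apply le_antisymm
  · refine iSup₂_le fun A hA => le_iInf₂ fun s hs => ?_
    obtain ⟨x, hxA, hxs⟩ := hA s hs
    exact le_trans (iInf₂_le x hxA) (le_iSup₂ (f := fun x (_ : x ∈ s) => φ x) x hxs)
  · by_contra h
    obtain ⟨r, h1, h2⟩ := exists_between (lt_of_not_ge h)
    have hA : {x | r ≤ φ x} ∈ grill F := by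
      intro s hs
      have hr : r < ⨆ x ∈ s, φ x := lt_of_lt_of_le h2 (iInf₂_le s hs)
      simp only [lt_iSup_iff] at hr
      obtain ⟨x, hxs, hx⟩ := hr
      exact ⟨x, le_of_lt hx, hxs⟩
    have h3 : r ≤ ⨅ x ∈ {x | r ≤ φ x}, φ x := le_iInf₂ fun x hx => hx
    have : r ≤ ⨆ A ∈ grill F, ⨅ x ∈ A, φ x :=
      le_trans h3 (le_iSup₂ (f := fun A (_ : A ∈ grill F) => ⨅ x ∈ A, φ x) _ hA)
    exact absurd (lt_of_lt_of_le h1 this) (lt_irrefl _)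
end
end

section
/- In the approach structure λ_V on V = [0,1] defined by λ_V(F)(v) = v ⊘ (⨆_{A ∈ F^#} ⨅ A), the adherence of a nonempty subset A ⊆ V at v, defined as adh_V A(v) = ⨆_{U ultrafilter containing A} λ_V(U)(v), equals v ⊘ ⨅ A. -/
open Filter Set
open scoped ENNReal

noncomputable section
attribute [local instance] Classical.propDecidable

lemma oslash_anti (v : V) {x y : V} (hxy : x ≤ y) : oslash v y ≤ oslash v x := by
  unfold oslash
  by_cases hx : x = 0
  · rw [if_pos hx]
    split <;> first | exact le_refl _ | exact Subtype.mk_le_mk.mpr (min_le_right _ _)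
  · have hxpos : (0:ℝ) < x.1 := lt_of_le_of_ne x.2.1 (by
      intro h; exact hx (Subtype.ext h.symm))
    have hy : y ≠ 0 := by
      intro h
      exact hx (le_antisymm (h ▸ hxy) (Subtype.mk_le_mk.mpr x.2.1))
    rw [if_neg hx, if_neg hy]
    refine Subtype.mk_le_mk.mpr (min_le_min ?_ le_rfl)
    exact div_le_div_of_nonneg_left v.2.1 hxpos (Subtype.coe_le_coe.mpr hxy)

lemma exists_lt_sInf_add (A : Set V) (hA : A.Nonempty) {ε : ℝ} (hε : 0 < ε) :
    ∃ a ∈ A, a.1 < (sInf A).1 + ε := by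
  by_contra h
  push_neg at h
  by_cases hle : (sInf A).1 + ε ≤ 1
  · have hm : (sInf A).1 + ε ∈ unitInterval :=
      ⟨by have := (sInf A).2.1; linarith, hle⟩
    have : (⟨(sInf A).1 + ε, hm⟩ : V) ≤ sInf A := by
      refine le_sInf fun a ha => ?_
      exact Subtype.mk_le_mk.mpr (h a ha)
    have := Subtype.coe_le_coe.mpr this
    simp only at this
    linarith
  · obtain ⟨a, ha⟩ := hA
    have := h a ha
    have := a.2.2
    linarith

/-- in `(V, λ_V)`, the adherence of a nonempty `A ⊆ V` at `v`
is `v ⊘ ⨅ A`. -/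
theorem stmt8 (A : Set V) (hA : A.Nonempty) (v : V) :
    adhV A v = oslash v (sInf A) := by
  apply le_antisymm
  · refine iSup_le fun U => iSup_le fun hAU => ?_
    unfold lamV
    apply oslash_anti
    have hAg : A ∈ grill (U : Filter V) := fun S hS =>
      Filter.nonempty_of_mem (Filter.inter_mem hAU hS)
    exact le_biSup _ hAg
  · -- construct an ultrafilter concentrating near `sInf A` inside `A`
    set ι := {e : ℝ // 0 < e}
    have hι : Nonempty ι := ⟨⟨1, one_pos⟩⟩
    set S : ι → Set V := fun e => A ∩ {x : V | x.1 < (sInf A).1 + e.1} with hS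
    have hSne : ∀ e : ι, (S e).Nonempty := by
      intro e
      obtain ⟨a, ha, hlt⟩ := exists_lt_sInf_add A hA e.2
      exact ⟨a, ha, hlt⟩
    have hdir : Directed (· ≥ ·) (fun e : ι => Filter.principal (S e)) := by
      intro e₁ e₂
      refine ⟨⟨min e₁.1 e₂.1, lt_min e₁.2 e₂.2⟩, ?_, ?_⟩ <;>
        · refine Filter.principal_mono.mpr ?_
          intro x hx
          refine ⟨hx.1, ?_⟩
          have := hx.2
          simp only [Set.mem_setOf_eq] at this ⊢
          have h1 : min e₁.1 e₂.1 ≤ e₁.1 := min_le_left _ _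
          have h2 : min e₁.1 e₂.1 ≤ e₂.1 := min_le_right _ _
          linarith
    set F : Filter V := ⨅ e : ι, Filter.principal (S e) with hF
    have hFne : F.NeBot := Filter.iInf_neBot_of_directed hdir fun e => by
      rw [Filter.principal_neBot_iff]; exact hSne e
    set U : Ultrafilter V := Ultrafilter.of F with hU
    have hUF : (U : Filter V) ≤ F := Ultrafilter.of_le F
    have hSU : ∀ e : ι, S e ∈ U := fun e =>
      hUF (Filter.mem_iInf_of_mem e (Filter.mem_principal_self _))
    have hAU : A ∈ U :=
      Filter.mem_of_superset (hSU ⟨1, one_pos⟩) Set.inter_subset_left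
    have hAg : A ∈ grill (U : Filter V) := fun T hT =>
      Filter.nonempty_of_mem (Filter.inter_mem hAU hT)
    have key : (⨆ B ∈ grill (U : Filter V), sInf B) = sInf A := by
      apply le_antisymm
      · refine iSup_le fun B => iSup_le fun hB => ?_
        rw [← Subtype.coe_le_coe]
        refine le_of_forall_pos_le_add fun ε hε => ?_
        obtain ⟨b, hbB, _, hbS⟩ := hB _ (hSU ⟨ε, hε⟩)
        have h1 : sInf B ≤ b := sInf_le hbB
        have h2 := Subtype.coe_le_coe.mpr h1
        simp only [Set.mem_setOf_eq] at hbS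
        linarith
      · exact le_biSup _ hAg
    have : oslash v (sInf A) = lamV U v := by rw [lamV, key]
    rw [this]
    exact le_iSup₂ (f := fun (W : Ultrafilter V) (_ : A ∈ W) => lamV W v) U hAU
end
end

section
/- In V = [0,1] with residuation ⊘, for any nonempty A ⊆ V, ε ∈ V, and v ∈ V: v ⊘ ⨅ A ≥ (v ⊘ ⨅ A^{(ε)}) · ε, where A^{(ε)} = {w ∈ V : w ⊘ ⨅ A ≥ ε} = {w ∈ V : w ≥ (⨅ A) · ε}. (This is the approach-space diagonal axiom for (V, λ_V).) -/
open Filter Set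
open scoped ENNReal

noncomputable section
attribute [local instance] Classical.propDecidable

/-- the diagonal axiom for `(V, λ_V)`: for nonempty `A ⊆ V`,
`v ⊘ ⨅ A ≥ (v ⊘ ⨅ A^{(ε)}) · ε`, where
`A^{(ε)} = {w : w ⊘ ⨅A ≥ ε} = {w : w ≥ (⨅ A) · ε}`. -/
theorem stmt9 (A : Set V) (hA : A.Nonempty) (ε v : V) :
    {w : V | ε ≤ oslash w (sInf A)} = {w : V | sInf A * ε ≤ w} ∧
    oslash v (sInf {w : V | ε ≤ oslash w (sInf A)}) * ε ≤ oslash v (sInf A) := by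
  set a := sInf A with ha
  have h1 : {w : V | ε ≤ oslash w a} = {w : V | a * ε ≤ w} := by
    ext w
    simp only [Set.mem_setOf_eq, oslash]
    by_cases h : a = 0
    · simp [h, zero_mul]
      exact ε.2.2
    · rw [if_neg h]
      have ha0 : (0:ℝ) < a.1 := lt_of_le_of_ne a.2.1 (by
        intro hc; exact h (Subtype.ext hc.symm))
      rw [← Subtype.coe_le_coe, ← Subtype.coe_le_coe]
      show ε.1 ≤ min (w.1 / a.1) 1 ↔ (a * ε).1 ≤ w.1
      rw [Set.Icc.coe_mul, le_min_iff]
      constructor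
      · rintro ⟨h2, _⟩
        rw [le_div_iff₀ ha0] at h2
        linarith
      · intro h2
        exact ⟨(le_div_iff₀ ha0).2 (by linarith), ε.2.2⟩
  refine ⟨h1, ?_⟩
  rw [h1]
  have hinf : sInf {w : V | a * ε ≤ w} = a * ε :=
    le_antisymm (sInf_le (le_refl (a * ε))) (le_sInf fun w hw => hw)
  rw [hinf]
  by_cases h : a = 0
  · rw [show oslash v a = 1 by simp [oslash, h]]
    rw [← Subtype.coe_le_coe]
    exact (oslash v (a*ε) * ε).2.2
  · by_cases hε : ε = 0
    · rw [hε, mul_zero]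
      exact (oslash v a).2.1
    · have ha0 : (0:ℝ) < a.1 := lt_of_le_of_ne a.2.1 (by intro hc; exact h (Subtype.ext hc.symm))
      have hε0 : (0:ℝ) < ε.1 := lt_of_le_of_ne ε.2.1 (by intro hc; exact hε (Subtype.ext hc.symm))
      have haε : a * ε ≠ 0 := by
        intro hc
        have : (a*ε).1 = 0 := congrArg Subtype.val hc
        rw [Set.Icc.coe_mul] at this
        nlinarith
      rw [← Subtype.coe_le_coe]
      show (oslash v (a*ε) * ε).1 ≤ (oslash v a).1
      rw [Set.Icc.coe_mul]
      simp only [oslash, if_neg h, if_neg haε]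
      show min (v.1 / (a*ε).1) 1 * ε.1 ≤ min (v.1 / a.1) 1
      rw [Set.Icc.coe_mul]
      have hv0 : (0:ℝ) ≤ v.1 := v.2.1
      rcases le_total (v.1 / (a.1*ε.1)) 1 with h2 | h2
      · rw [min_eq_left h2]
        have heq : v.1 / (a.1*ε.1) * ε.1 = v.1 / a.1 := by
          field_simp
        rw [heq]
        have hv1 : v.1 ≤ a.1 * ε.1 := (div_le_one (by positivity)).1 h2
        refine le_min le_rfl ?_
        rw [div_le_one ha0]
        nlinarith [ε.2.2]
      · rw [min_eq_right h2, one_mul]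
        have hva : a.1 * ε.1 ≤ v.1 := (one_le_div (by positivity)).1 h2
        refine le_min ?_ ε.2.2
        rw [le_div_iff₀ ha0]
        nlinarith
end
end

section
/- Let (X, λ) be a convergence approach space and S a set of contractions X → [0,1]. Then the pointwise infimum ⨅_{f ∈ S} f is a contraction. Consequently, the set C(X,V) of contractions X → V is a complete lattice under the pointwise order. -/
open Filter Set
open scoped ENNReal

noncomputable section
attribute [local instance] Classical.propDecidable

lemma le_oslash_iff (c t a : V) : c ≤ oslash t a ↔ (c : ℝ) * (a : ℝ) ≤ (t : ℝ) := by
  unfold oslash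
  by_cases h : a = 0
  · subst h
    rw [if_pos rfl]
    constructor
    · intro _
      have h0 : ((0 : V) : ℝ) = 0 := rfl
      rw [h0, mul_zero]
      exact t.2.1
    · intro _
      exact c.2.2
  · have ha : 0 < (a : ℝ) := lt_of_le_of_ne a.2.1 (fun h' => h (Subtype.ext h'.symm))
    rw [if_neg h, ← Subtype.coe_le_coe]
    show (c : ℝ) ≤ min ((t : ℝ) / (a : ℝ)) 1 ↔ _
    rw [le_min_iff, le_div_iff₀ ha]
    simp only [and_iff_left c.2.2]

lemma limsupF_mono' {X : Type*} (F : Set (Set X)) {f g : X → V} (h : ∀ y, f y ≤ g y) :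
    limsupF F f ≤ limsupF F g := by
  unfold limsupF
  exact iInf_mono fun s => iInf_mono fun _ => iSup_mono fun t => iSup_mono fun _ => h t

lemma contr_iInf {X : Type*} (Λ : CAS X) (S : Set (X → V)) (hS : ∀ f ∈ S, Contr Λ f) :
    Contr Λ (fun x => ⨅ f ∈ S, f x) := by
  intro F x
  set g : X → V := fun x => ⨅ f ∈ S, f x with hg
  rw [le_oslash_iff]
  have hL : ∀ f ∈ S, limsupF F.sets g ≤ limsupF F.sets f := fun f hf =>
    limsupF_mono' _ (fun y => iInf₂_le f hf)
  have key : ∀ f ∈ S, (Λ.lam F x : ℝ) * (limsupF F.sets g : ℝ) ≤ (f x : ℝ) := by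
    intro f hf
    have h1 := (le_oslash_iff _ _ _).mp (hS f hf F x)
    calc (Λ.lam F x : ℝ) * (limsupF F.sets g : ℝ)
        ≤ (Λ.lam F x : ℝ) * (limsupF F.sets f : ℝ) :=
          mul_le_mul_of_nonneg_left (hL f hf) (Λ.lam F x).2.1
      _ ≤ (f x : ℝ) := h1
  have hc : (Λ.lam F x) * (limsupF F.sets g) ≤ g x := by
    refine le_iInf₂ fun f hf => ?_
    rw [← Subtype.coe_le_coe]
    exact key f hf
  exact Subtype.coe_le_coe.mpr hc

/-- the pointwise infimum of any set of contractions is a contraction;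
consequently the set of contractions is a complete lattice for the pointwise order
(every subset has a greatest lower bound and a least upper bound). -/
theorem stmt12 {X : Type*} (Λ : CAS X) :
    (∀ S : Set (X → V), (∀ f ∈ S, Contr Λ f) → Contr Λ (fun x => ⨅ f ∈ S, f x)) ∧
    (∀ T : Set {f : X → V // Contr Λ f}, (∃ g, IsGLB T g) ∧ (∃ g, IsLUB T g)) := by
  refine ⟨fun S hS => contr_iInf Λ S hS, fun T => ?_⟩
  have glbAll : ∀ T' : Set {f : X → V // Contr Λ f}, ∃ g, IsGLB T' g := by
    intro T'
    refine ⟨⟨fun x => ⨅ f ∈ Subtype.val '' T', f x, contr_iInf Λ _ ?_⟩, ?_, ?_⟩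
    · rintro f ⟨⟨f, hf⟩, -, rfl⟩; exact hf
    · rintro ⟨f, hf⟩ hfT
      rw [Subtype.mk_le_mk]
      exact fun x => iInf₂_le f ⟨⟨f, hf⟩, hfT, rfl⟩
    · rintro ⟨h, hh⟩ hlb
      rw [Subtype.mk_le_mk]
      intro x
      refine le_iInf₂ ?_
      rintro f ⟨⟨f, hf⟩, hfT, rfl⟩
      exact (hlb hfT : h ≤ f) x
  refine ⟨glbAll T, ?_⟩
  obtain ⟨g, hg⟩ := glbAll (upperBounds T)
  exact ⟨g, fun t ht => hg.2 fun u hu => hu ht, hg.1⟩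
end
end

section
/- Let (X, λ) be a convergence approach space and f, g : X → [0,1] contractions. Then the pointwise supremum f ∨ g is a contraction. -/
open Filter Set
open scoped ENNReal

noncomputable section
attribute [local instance] Classical.propDecidable

lemma V_pos_of_ne_zero {x : V} (hx : x ≠ 0) : (0:ℝ) < x.1 := by
  rcases lt_or_eq_of_le x.2.1 with h | h
  · exact h
  · exact absurd (Subtype.ext h.symm) hx

lemma oslash_mono_left {a b x : V} (h : a ≤ b) : oslash a x ≤ oslash b x := by
  unfold oslash
  split
  · exact le_rfl
  · next hx =>
    have hx' := V_pos_of_ne_zero hx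
    apply Subtype.mk_le_mk.mpr
    exact min_le_min (by gcongr) le_rfl

lemma oslash_anti_right {t x y : V} (h : x ≤ y) : oslash t y ≤ oslash t x := by
  unfold oslash
  by_cases hy : y = 0
  · have hx : x = 0 := le_antisymm (hy ▸ h) x.2.1
    simp [hx, hy]
  · by_cases hx : x = 0
    · simp only [hx, if_pos rfl, if_neg hy]
      exact Subtype.mk_le_mk.mpr (min_le_right _ _)
    · simp only [if_neg hx, if_neg hy]
      have hx' := V_pos_of_ne_zero hx
      apply Subtype.mk_le_mk.mpr
      exact min_le_min (div_le_div_of_nonneg_left t.2.1 hx' h) le_rfl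

lemma limsupF_sup_le {X : Type*} (F : Filter X) (f g : X → V) :
    limsupF F.sets (f ⊔ g) ≤ limsupF F.sets f ⊔ limsupF F.sets g := by
  by_contra hlt
  have hlt' : limsupF F.sets f ⊔ limsupF F.sets g < limsupF F.sets (f ⊔ g) :=
    lt_of_not_ge hlt
  set L := limsupF F.sets (f ⊔ g)
  obtain ⟨hA, hB⟩ := sup_lt_iff.mp hlt'
  have hA' : ¬ (L ≤ limsupF F.sets f) := not_le_of_gt hA
  have hB' : ¬ (L ≤ limsupF F.sets g) := not_le_of_gt hB
  rw [limsupF, le_iInf₂_iff] at hA' hB'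
  push_neg at hA' hB'
  obtain ⟨s1, hs1, hS1⟩ := hA'
  obtain ⟨s2, hs2, hS2⟩ := hB'
  have h1 : (⨆ t ∈ s1, f t) < L := hS1
  have h2 : (⨆ t ∈ s2, g t) < L := hS2
  have hmem : s1 ∩ s2 ∈ F := Filter.inter_mem hs1 hs2
  have hL : L ≤ ⨆ t ∈ s1 ∩ s2, (f ⊔ g) t := iInf₂_le (s1 ∩ s2) hmem
  have hmax : (⨆ t ∈ s1 ∩ s2, (f ⊔ g) t) ≤ (⨆ t ∈ s1, f t) ⊔ (⨆ t ∈ s2, g t) := by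
    apply iSup₂_le
    intro t ht
    exact sup_le_sup (le_iSup₂ (f := fun t _ => f t) t ht.1)
      (le_iSup₂ (f := fun t _ => g t) t ht.2)
  exact absurd (hL.trans hmax) (not_le_of_gt (sup_lt_iff.mpr ⟨h1, h2⟩))

/-- the pointwise supremum of two contractions is a contraction. -/
theorem stmt13 {X : Type*} (Λ : CAS X) (f g : X → V)
    (hf : Contr Λ f) (hg : Contr Λ g) : Contr Λ (f ⊔ g) := by
  intro F x
  rcases le_total (limsupF F.sets f) (limsupF F.sets g) with h | h
  · calc Λ.lam F x ≤ oslash (g x) (limsupF F.sets g) := hg F x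
      _ ≤ oslash ((f ⊔ g) x) (limsupF F.sets g) :=
          oslash_mono_left (le_sup_right : g x ≤ (f ⊔ g) x)
      _ ≤ oslash ((f ⊔ g) x) (limsupF F.sets (f ⊔ g)) :=
          oslash_anti_right ((limsupF_sup_le F f g).trans (sup_le h le_rfl))
  · calc Λ.lam F x ≤ oslash (f x) (limsupF F.sets f) := hf F x
      _ ≤ oslash ((f ⊔ g) x) (limsupF F.sets f) :=
          oslash_mono_left (le_sup_left : f x ≤ (f ⊔ g) x)
      _ ≤ oslash ((f ⊔ g) x) (limsupF F.sets (f ⊔ g)) :=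
          oslash_anti_right ((limsupF_sup_le F f g).trans (sup_le le_rfl h))
end
end

section
/- Let (X, λ) be a convergence approach space and define C(f) = ⨅{g contraction : f ≤ g} for f ∈ [0,1]^X. Then C is a lower-hull operator: (1) f ≤ C(f); (2) C(f ∨ g) = C(f) ∨ C(g); (3) C(C(f)) = C(f); (4) C(f · v) = C(f) · v for every constant v ∈ [0,1]. -/
open Filter Set
open scoped ENNReal

noncomputable section
attribute [local instance] Classical.propDecidable

namespace Stmt14Aux

lemma le_one' (x : V) : x ≤ 1 := (le_top : x ≤ ⊤)

lemma oslash_zero (t : V) : oslash t 0 = 1 := if_pos rfl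

lemma vpos {v : V} (hv : v ≠ 0) : (0:ℝ) < v.1 :=
  lt_of_le_of_ne v.2.1 (fun h => hv (Subtype.ext h.symm))

/-- `x * v ≤ y ↔ x ≤ y ⊘ v` : multiplication by `v` is left adjoint to residuation. -/
lemma gc (v : V) : GaloisConnection (fun x : V => x * v) (fun y : V => oslash y v) := by
  intro x y
  by_cases hv : v = 0
  · subst hv
    simp only [mul_zero, oslash_zero]
    exact ⟨fun _ => le_one' x, fun _ => y.2.1⟩
  · have hv' : (0:ℝ) < v.1 := vpos hv
    unfold oslash
    beta_reduce
    rw [if_neg hv]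
    constructor
    · intro h
      exact le_min ((le_div_iff₀ hv').mpr h) x.2.2
    · intro h
      have : (x:ℝ) ≤ y.1 / v.1 := le_trans h (min_le_left _ _)
      exact (le_div_iff₀ hv').mp this

lemma oslash_mono_left {t t' : V} (v : V) (h : t ≤ t') : oslash t v ≤ oslash t' v :=
  (gc v).monotone_u h

lemma mul_le_mul_right'' (x : V) {z z' : V} (h : z ≤ z') : x * z ≤ x * z' := by
  rw [mul_comm x z, mul_comm x z']
  exact (gc x).monotone_l h

lemma oslash_anti_right (y : V) {z z' : V} (h : z ≤ z') : oslash y z' ≤ oslash y z :=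
  ((gc z) _ _).mp (le_trans (mul_le_mul_right'' _ h) ((gc z').l_u_le y))

lemma one_le_oslash_one (x : V) : (1:V) ≤ oslash 1 x :=
  (gc x).le_u (by rw [one_mul]; exact le_one' x)

lemma oslash_mul_mul (t s v : V) : oslash t s ≤ oslash (t * v) (s * v) := by
  refine (gc (s * v)).le_u ?_
  show oslash t s * (s * v) ≤ t * v
  rw [← mul_assoc]
  exact (gc v).monotone_l ((gc s).l_u_le t)

lemma oslash_mul_self {y v : V} (h : y ≤ v) (hv : v ≠ 0) : oslash y v * v = y := by
  have hv' := vpos hv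
  apply Subtype.ext
  show (oslash y v).1 * v.1 = y.1
  rw [oslash, if_neg hv]
  show min (y.1 / v.1) 1 * v.1 = y.1
  rw [min_eq_left ((div_le_one hv').mpr h), div_mul_cancel₀ _ (ne_of_gt hv')]

lemma oslash_mul_cancel {v : V} (hv : v ≠ 0) (x : V) : oslash (x * v) v = x := by
  have hv' := vpos hv
  apply Subtype.ext
  rw [oslash, if_neg hv]
  show min ((x.1 * v.1) / v.1) 1 = x.1
  rw [mul_div_cancel_right₀ _ (ne_of_gt hv'), min_eq_left x.2.2]

section limsup

variable {X : Type*}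

lemma limsup_mono (F : Set (Set X)) {f g : X → V} (h : f ≤ g) :
    limsupF F f ≤ limsupF F g :=
  iInf₂_mono fun s _ => iSup₂_mono fun t _ => h t

lemma limsup_mul (F : Filter X) (f : X → V) (v : V) :
    limsupF F.sets (fun x => f x * v) = limsupF F.sets f * v := by
  by_cases hv : v = 0
  · subst hv
    simp only [mul_zero]
    refine le_antisymm (le_trans (iInf₂_le univ F.univ_sets)
      (iSup₂_le fun _ _ => le_rfl)) bot_le
  · have hin : ∀ s : Set X, (⨆ t ∈ s, f t * v) = (⨆ t ∈ s, f t) * v := by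
      intro s
      exact ((gc v).l_iSup₂ (f := fun t (_ : t ∈ s) => f t)).symm
    have h1 : limsupF F.sets (fun x => f x * v) = ⨅ s ∈ F.sets, (⨆ t ∈ s, f t) * v := by
      unfold limsupF
      exact iInf_congr fun s => iInf_congr fun hs => hin s
    set y₀ := ⨅ s ∈ F.sets, (⨆ t ∈ s, f t) * v with hy₀
    have hyv : y₀ ≤ v := by
      refine le_trans (iInf₂_le univ F.univ_sets) ?_
      calc (⨆ t ∈ (univ : Set X), f t) * v ≤ 1 * v := (gc v).monotone_l (le_one' _)
        _ = v := one_mul v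
    have hu : oslash y₀ v = limsupF F.sets f :=
      calc oslash y₀ v = ⨅ s ∈ F.sets, oslash ((⨆ t ∈ s, f t) * v) v := (gc v).u_iInf₂
        _ = limsupF F.sets f := iInf_congr fun s => iInf_congr fun _ => oslash_mul_cancel hv _
    rw [h1, ← hu, oslash_mul_self hyv hv]

lemma limsup_sup (F : Filter X) (f g : X → V) :
    limsupF F.sets (f ⊔ g) = limsupF F.sets f ⊔ limsupF F.sets g := by
  have hin : ∀ s : Set X, (⨆ t ∈ s, (f ⊔ g) t) = (⨆ t ∈ s, f t) ⊔ (⨆ t ∈ s, g t) := by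
    intro s
    simp only [Pi.sup_apply]
    rw [iSup_subtype', iSup_subtype', iSup_subtype', iSup_sup_eq]
  refine le_antisymm ?_ (sup_le (limsup_mono _ le_sup_left) (limsup_mono _ le_sup_right))
  by_contra hc
  rw [not_le] at hc
  set c := limsupF F.sets (f ⊔ g) with hcdef
  have hf : limsupF F.sets f < c := lt_of_le_of_lt le_sup_left hc
  have hg : limsupF F.sets g < c := lt_of_le_of_lt le_sup_right hc
  have h1 : ∃ s ∈ F.sets, (⨆ t ∈ s, f t) < c := by
    by_contra h; push_neg at h
    exact absurd (le_iInf₂ h : c ≤ limsupF F.sets f) (not_le.mpr hf)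
  have h2 : ∃ s ∈ F.sets, (⨆ t ∈ s, g t) < c := by
    by_contra h; push_neg at h
    exact absurd (le_iInf₂ h : c ≤ limsupF F.sets g) (not_le.mpr hg)
  obtain ⟨s₁, hs₁, hf1⟩ := h1
  obtain ⟨s₂, hs₂, hg2⟩ := h2
  have hmem : s₁ ∩ s₂ ∈ F.sets := F.inter_sets hs₁ hs₂
  have hcle : c ≤ (⨆ t ∈ s₁ ∩ s₂, f t) ⊔ (⨆ t ∈ s₁ ∩ s₂, g t) := by
    have := iInf₂_le (f := fun s (_ : s ∈ F.sets) => ⨆ t ∈ s, (f ⊔ g) t) (s₁ ∩ s₂) hmem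
    rw [hin] at this
    exact this
  have hA : (⨆ t ∈ s₁ ∩ s₂, f t) ≤ ⨆ t ∈ s₁, f t :=
    iSup₂_le fun t ht => le_iSup₂ (f := fun t (_ : t ∈ s₁) => f t) t ht.1
  have hB : (⨆ t ∈ s₁ ∩ s₂, g t) ≤ ⨆ t ∈ s₂, g t :=
    iSup₂_le fun t ht => le_iSup₂ (f := fun t (_ : t ∈ s₂) => g t) t ht.2
  have : c < c := lt_of_le_of_lt (hcle.trans (sup_le_sup hA hB))
    (sup_lt_iff.mpr ⟨hf1, hg2⟩)
  exact lt_irrefl c this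

end limsup

section contr

variable {X : Type*} (Λ : CAS X)

lemma contr_one : Contr Λ (fun _ => (1:V)) := fun F x =>
  (le_one' _).trans (one_le_oslash_one _)

lemma contr_sInf (S : Set (X → V)) (hS : ∀ g ∈ S, Contr Λ g) : Contr Λ (sInf S) := by
  intro F x
  have hmem : ∀ g : S, Λ.lam F x ≤ oslash ((g : X → V) x) (limsupF F.sets (sInf S)) := by
    intro g
    refine (hS g g.2 F x).trans (oslash_anti_right _ ?_)
    exact limsup_mono _ (sInf_le g.2)
  have : Λ.lam F x ≤ ⨅ g : S, oslash ((g : X → V) x) (limsupF F.sets (sInf S)) :=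
    le_iInf hmem
  refine this.trans (le_of_eq ?_)
  rw [sInf_apply]
  exact ((gc (limsupF F.sets (sInf S))).u_iInf (f := fun g : S => (g : X → V) x)).symm

lemma contr_mul {g : X → V} (hg : Contr Λ g) (v : V) :
    Contr Λ (fun x => g x * v) := by
  intro F x
  rw [limsup_mul]
  exact (hg F x).trans (oslash_mul_mul _ _ _)

lemma contr_oslash {g : X → V} (hg : Contr Λ g) (v : V) :
    Contr Λ (fun x => oslash (g x) v) := by
  intro F x
  set h : X → V := fun x => oslash (g x) v with hdef
  have hle : limsupF F.sets h * v ≤ limsupF F.sets g := by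
    rw [← limsup_mul]
    exact limsup_mono _ (fun y => (gc v).l_u_le (g y))
  refine (gc (limsupF F.sets h)).le_u ?_
  refine (gc v).le_u ?_
  show Λ.lam F x * limsupF F.sets h * v ≤ g x
  rw [mul_assoc]
  exact ((gc (limsupF F.sets h * v)) _ _).mpr ((hg F x).trans (oslash_anti_right _ hle))

lemma contr_sup {f g : X → V} (hf : Contr Λ f) (hg : Contr Λ g) :
    Contr Λ (f ⊔ g) := by
  intro F x
  rw [limsup_sup]
  rcases le_total (limsupF F.sets f) (limsupF F.sets g) with h | h
  · rw [sup_eq_right.mpr h]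
    exact (hg F x).trans (oslash_mono_left _ le_sup_right)
  · rw [sup_eq_left.mpr h]
    exact (hf F x).trans (oslash_mono_left _ le_sup_left)

lemma part1 (f : X → V) : f ≤ Cop Λ f :=
  le_sInf fun _ hg => hg.2

lemma Cop_contr (f : X → V) : Contr Λ (Cop Λ f) :=
  contr_sInf Λ _ (fun _ hg => hg.1)

lemma Cop_le {f g : X → V} (hg : Contr Λ g) (hfg : f ≤ g) : Cop Λ f ≤ g :=
  sInf_le ⟨hg, hfg⟩

lemma Cop_mono {f g : X → V} (hfg : f ≤ g) : Cop Λ f ≤ Cop Λ g :=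
  sInf_le_sInf fun h hh => ⟨hh.1, hfg.trans hh.2⟩

end contr

end Stmt14Aux

open Stmt14Aux in
theorem stmt14' {X : Type*} (Λ : CAS X) :
    (∀ f : X → V, f ≤ Cop Λ f) ∧
    (∀ f g : X → V, Cop Λ (f ⊔ g) = Cop Λ f ⊔ Cop Λ g) ∧
    (∀ f : X → V, Cop Λ (Cop Λ f) = Cop Λ f) ∧
    (∀ (f : X → V) (v : V), Cop Λ (fun x => f x * v) = fun x => Cop Λ f x * v) := by
  refine ⟨part1 Λ, ?_, ?_, ?_⟩
  · intro f g
    refine le_antisymm ?_ (sup_le (Cop_mono Λ le_sup_left) (Cop_mono Λ le_sup_right))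
    exact Cop_le Λ (contr_sup Λ (Cop_contr Λ f) (Cop_contr Λ g))
      (sup_le_sup (part1 Λ f) (part1 Λ g))
  · intro f
    exact le_antisymm (Cop_le Λ (Cop_contr Λ f) le_rfl) (part1 Λ _)
  · intro f v
    refine le_antisymm ?_ ?_
    · exact Cop_le Λ (contr_mul Λ (Cop_contr Λ f) v)
        (fun x => (gc v).monotone_l (part1 Λ f x))
    · have hC : Cop Λ f ≤ fun x => oslash (Cop Λ (fun x => f x * v) x) v :=
        Cop_le Λ (contr_oslash Λ (Cop_contr Λ (fun x => f x * v)) v)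
          (fun x => (gc v).le_u (part1 Λ (fun x => f x * v) x))
      exact fun x => (gc v).l_le (hC x)

/-- `C(f) = ⨅ {g contraction : f ≤ g}` is a lower-hull operator:
(1) `f ≤ C f`; (2) `C (f ∨ g) = C f ∨ C g`; (3) `C (C f) = C f`;
(4) `C (f · v) = C f · v`. -/
theorem stmt14 {X : Type*} (Λ : CAS X) :
    (∀ f : X → V, f ≤ Cop Λ f) ∧
    (∀ f g : X → V, Cop Λ (f ⊔ g) = Cop Λ f ⊔ Cop Λ g) ∧
    (∀ f : X → V, Cop Λ (Cop Λ f) = Cop Λ f) ∧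
    (∀ (f : X → V) (v : V), Cop Λ (fun x => f x * v) = fun x => Cop Λ f x * v) :=
  stmt14' Λ
end
end

section
/- Let (X, λ) be a convergence approach space, A ⊆ X and ε ∈ [0,1]. Define θ_A^ε(x) = 1 if x ∈ A and ε otherwise. Then θ_A^ε is a contraction into (V, λ_V) if and only if A is closed in the convergence τ_ε on X, where x ∈ lim_{τ_ε} F iff λ(F)(x) > ε (A is τ_ε-closed means: A ∈ F^# implies lim_{τ_ε}F ⊆ A). -/
open Filter Set
open scoped ENNReal

noncomputable section
attribute [local instance] Classical.propDecidable

/-- `θ_A^ε`: value `1` on `A` and `ε` elsewhere. -/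
def thetaEps {X : Type*} (A : Set X) (ε : V) : X → V := fun x => if x ∈ A then 1 else ε

lemma V_le_one (x : V) : x ≤ 1 := Subtype.coe_le_coe.mp (by simpa using x.2.2)

lemma V_one_ne_zero : (1 : V) ≠ 0 := by
  intro h
  have := congrArg Subtype.val h
  simp at this

lemma oslash_one (t : V) : oslash t 1 = t := by
  unfold oslash
  rw [if_neg V_one_ne_zero]
  apply Subtype.ext
  simp [min_eq_left t.2.2]

lemma oslash_of_le {t v : V} (h : v ≤ t) : oslash t v = 1 := by
  unfold oslash
  by_cases hv : v = 0
  · rw [if_pos hv]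
  · rw [if_neg hv]
    apply Subtype.ext
    have hv0 : (0:ℝ) < v.1 := lt_of_le_of_ne v.2.1 (fun h' => hv (Subtype.ext h'.symm))
    have : (1:ℝ) ≤ t.1 / v.1 := (one_le_div hv0).mpr h
    simp [min_eq_right this]

lemma eps_le_thetaEps {X : Type*} (A : Set X) (ε : V) (x : X) : ε ≤ thetaEps A ε x := by
  unfold thetaEps
  split
  · exact V_le_one ε
  · exact le_rfl

lemma limsup_theta_of_grill {X : Type*} {A : Set X} {ε : V} {F : Filter X}
    (h : A ∈ grill F) : limsupF F.sets (thetaEps A ε) = 1 := by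
  refine le_antisymm (V_le_one _) (le_iInf₂ fun s hs => ?_)
  obtain ⟨a, haA, has⟩ := h s hs
  have : thetaEps A ε a = 1 := if_pos haA
  calc (1:V) = thetaEps A ε a := this.symm
    _ ≤ ⨆ t ∈ s, thetaEps A ε t := le_iSup₂ (f := fun t _ => thetaEps A ε t) a has

lemma limsup_theta_of_not_grill {X : Type*} {A : Set X} {ε : V} {F : Filter X}
    (h : A ∉ grill F) : limsupF F.sets (thetaEps A ε) ≤ ε := by
  simp only [grill, Set.mem_setOf_eq, not_forall] at h
  obtain ⟨s, hs, hempty⟩ := h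
  refine le_trans (iInf₂_le s hs) (iSup₂_le fun t ht => ?_)
  have htA : t ∉ A := fun htA => hempty ⟨t, htA, ht⟩
  rw [thetaEps, if_neg htA]

/-- `θ_A^ε` is a contraction iff `A` is closed in the convergence
`τ_ε` (`x ∈ lim_{τ_ε} F ↔ λ(F)(x) > ε`), i.e. iff whenever `A ∈ F^#`,
every `x` with `λ(F)(x) > ε` lies in `A`. -/
theorem stmt16 {X : Type*} (Λ : CAS X) (A : Set X) (ε : V) :
    Contr Λ (thetaEps A ε) ↔
    (∀ F : Filter X, A ∈ grill F → ∀ x : X, ε < Λ.lam F x → x ∈ A) := by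
  constructor
  · intro h F hg x hlt
    by_contra hx
    have := h F x
    rw [limsup_theta_of_grill hg, oslash_one, thetaEps, if_neg hx] at this
    exact absurd hlt (not_lt.mpr this)
  · intro h F x
    by_cases hg : A ∈ grill F
    · rw [limsup_theta_of_grill hg, oslash_one]
      by_cases hx : x ∈ A
      · rw [thetaEps, if_pos hx]; exact V_le_one _
      · rw [thetaEps, if_neg hx]
        exact le_of_not_gt fun hlt => hx (h F hg x hlt)
    · rw [oslash_of_le ((limsup_theta_of_not_grill hg).trans (eps_le_thetaEps A ε x))]
      exact V_le_one _
end
end
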